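/- arXiv:1609.01642 — 2 statements merged into one kernel-verified Lean document; each statement's English description precedes it below -/
import Mathlib

section
/- For a bounded Vilenkin group and 1/2 < p ≤ 1, the maximal operator V^{(1)} is p-quasi-local on the complement of the double of the support square: for every p-atom a supported on I_N × I_N (i.e., supp a ⊂ I_N × I_N, ‖a‖_∞ ≤ M_N^{2/p}, ∫ a dμ = 0), one has ∫_{(G_m∖I_N) × (G_m∖I_N)} (sup_n |V_n^{(1)}(x,y;a)|)^p dμ(x,y) ≤ c_p < ∞, with c_p independent of the atom a and of N. -/
open Complex Finset

noncomputable section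

/-- The generalized number system: `M 0 = 1`, `M (k+1) = m k * M k`. -/
def Mf (m : ℕ → ℕ) : ℕ → ℕ
  | 0 => 1
  | k + 1 => m k * Mf m k

/-- The generalized Rademacher function `r_k(x) = exp(2πi x_k / m_k)`. -/
def rad (m : ℕ → ℕ) (k : ℕ) (x : ∀ j, ZMod (m j)) : ℂ :=
  Complex.exp (2 * Real.pi * Complex.I * (x k).val / (m k))

/-- The Vilenkin function `ψ_n(x) = ∏ k, r_k(x)^{n_k}` where `n_k = (n / M_k) % m_k`
is the k-th digit of `n` in the generalized number system. -/
def psi (m : ℕ → ℕ) (n : ℕ) (x : ∀ j, ZMod (m j)) : ℂ :=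
  ∏ k ∈ Finset.range (n + 1), rad m k x ^ ((n / Mf m k) % m k)

/-- Vilenkin Dirichlet kernel. -/
def Dker (m : ℕ → ℕ) (n : ℕ) (x : ∀ j, ZMod (m j)) : ℂ :=
  ∑ j ∈ Finset.range n, psi m j x

/-- One-dimensional Vilenkin Fejér kernel. -/
def Fejer (m : ℕ → ℕ) (n : ℕ) (x : ∀ j, ZMod (m j)) : ℂ :=
  (n : ℂ)⁻¹ * ∑ k ∈ Finset.range n, Dker m k x

/-- Two-dimensional Marcinkiewicz–Fejér kernel. -/
def MKer (m : ℕ → ℕ) (n : ℕ) (x y : ∀ j, ZMod (m j)) : ℂ :=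
  (n : ℂ)⁻¹ * ∑ k ∈ Finset.range n, Dker m k x * Dker m k y

/-- `e_s ∈ G_m`: the element whose s-th coordinate is 1 and all others are 0. -/
def evec (m : ℕ → ℕ) (s : ℕ) : ∀ j, ZMod (m j) :=
  fun j => if j = s then 1 else 0

/-- `r_{i,n}(x,y) = ∏_{l=i}^{n} ∑_{s=0}^{m_l-1} ψ_{M_l}(x+y)^s`. -/
def rr (m : ℕ → ℕ) (i n : ℕ) (x y : ∀ j, ZMod (m j)) : ℂ :=
  ∏ l ∈ Finset.Icc i n, ∑ s ∈ Finset.range (m l), psi m (Mf m l) (x + y) ^ s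

open MeasureTheory ENNReal NNReal
open scoped Classical

/-- Discrete measurable structure on `ZMod n`. -/
instance (n : ℕ) : MeasurableSpace (ZMod n) := ⊤

/-- The cylinder set `I_k(z) = {x : x_j = z_j for j < k}`. -/
def cyl (m : ℕ → ℕ) (k : ℕ) (z : ∀ j, ZMod (m j)) : Set (∀ j, ZMod (m j)) :=
  {x | ∀ j < k, x j = z j}

/-! ### Auxiliary material for the proof of `stmt12` -/

instance (n : ℕ) : MeasurableSingletonClass (ZMod n) := ⟨fun _ => trivial⟩
instance (n : ℕ) : Countable (ZMod n) := by
  cases n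
  · exact inferInstanceAs (Countable ℤ)
  · exact inferInstanceAs (Countable (Fin _))

section Aux
variable (m : ℕ → ℕ)

lemma aux_Mf_pos (hm : ∀ k, 2 ≤ m k) (k : ℕ) : 0 < Mf m k := by
  induction k with
  | zero => simp [Mf]
  | succ k ih => have := hm k; have h2 : 0 < m k := by omega
                 simpa [Mf] using Nat.mul_pos h2 ih

lemma aux_Mf_le (hm : ∀ k, 2 ≤ m k) {i j : ℕ} (h : i ≤ j) :
    Mf m i * 2 ^ (j - i) ≤ Mf m j := by
  induction j with
  | zero => simp_all
  | succ j ih =>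
    rcases Nat.lt_or_ge i (j+1) with h' | h'
    · have hij : i ≤ j := by omega
      have : j + 1 - i = (j - i) + 1 := by omega
      rw [this, pow_succ]
      calc Mf m i * (2 ^ (j - i) * 2) = (Mf m i * 2 ^ (j - i)) * 2 := by ring
      _ ≤ Mf m j * 2 := by exact Nat.mul_le_mul_right 2 (ih hij)
      _ ≤ Mf m j * m j := Nat.mul_le_mul_left _ (hm j)
      _ = Mf m (j+1) := by rw [Mf, Nat.mul_comm]
    · have : i = j + 1 := by omega
      subst this
      simp

lemma aux_Mf_prod_if (hm : ∀ k, 2 ≤ m k) {k N : ℕ} (h : k ≤ N) :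
    Mf m k * ∏ j ∈ Finset.range N, (if k ≤ j then m j else 1) = Mf m N := by
  induction N, h using Nat.le_induction with
  | base =>
    have : ∀ j ∈ Finset.range k, (if k ≤ j then m j else 1) = 1 := by
      intro j hj; rw [if_neg]; simp at hj; omega
    rw [Finset.prod_congr rfl this]
    simp
  | succ N hN ih =>
    rw [Finset.prod_range_succ, if_pos hN, ← Nat.mul_assoc, ih]
    rw [Mf, Nat.mul_comm]

lemma aux_cyl_meas (k : ℕ) (z : ∀ j, ZMod (m j)) : MeasurableSet (cyl m k z) := by
  have : cyl m k z = ⋂ j ∈ Set.Iio k, (fun x : ∀ j, ZMod (m j) => x j) ⁻¹' {z j} := by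
    ext x; simp [cyl]
  rw [this]
  exact MeasurableSet.biInter (Set.to_countable _)
    (fun j _ => (measurable_pi_apply j) (MeasurableSet.singleton (z j)))

lemma aux_meas_add_left (z : (∀ j, ZMod (m j)) × (∀ j, ZMod (m j))) :
    Measurable (fun w : (∀ j, ZMod (m j)) × (∀ j, ZMod (m j)) => z + w) :=
  (measurable_const.add measurable_fst).prodMk (measurable_const.add measurable_snd)

lemma aux_meas_neg :
    Measurable (fun w : (∀ j, ZMod (m j)) × (∀ j, ZMod (m j)) => -w) :=
  measurable_fst.neg.prodMk measurable_snd.neg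

lemma aux_meas_sub2 :
    Measurable (fun p : ((∀ j, ZMod (m j)) × (∀ j, ZMod (m j))) ×
        ((∀ j, ZMod (m j)) × (∀ j, ZMod (m j))) => p.1 - p.2) :=
  ((measurable_fst.fst).sub (measurable_snd.fst)).prodMk
    ((measurable_fst.snd).sub (measurable_snd.snd))

lemma aux_meas_const_sub (z : (∀ j, ZMod (m j)) × (∀ j, ZMod (m j))) :
    Measurable (fun w : (∀ j, ZMod (m j)) × (∀ j, ZMod (m j)) => z - w) :=
  (measurable_const.sub measurable_fst).prodMk (measurable_const.sub measurable_snd)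

def extD (N : ℕ) (d : ∀ j : Fin N, ZMod (m j)) : ∀ j, ZMod (m j) :=
  fun j => if h : j < N then d ⟨j, h⟩ else 0

/-- The exceptional set where a term of `V1` may fail to vanish. -/
def Eset (N q k : ℕ) : Set ((∀ j, ZMod (m j)) × (∀ j, ZMod (m j))) :=
  {z | (∀ j, j < k → j ≠ q → z.1 j = 0) ∧ (∀ j, j < k → z.2 j = 0) ∧
    (∀ r, k < r → r < N → z.1 r + z.2 r = 0)}

lemma aux_Eset_meas (N q k : ℕ) : MeasurableSet (Eset m N q k) := by
  have : Eset m N q k =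
      (⋂ j ∈ Set.Iio k, ⋂ (_ : j ≠ q), (fun z : (∀ j, ZMod (m j)) × (∀ j, ZMod (m j)) => z.1 j) ⁻¹' {0})
      ∩ ((⋂ j ∈ Set.Iio k, (fun z : (∀ j, ZMod (m j)) × (∀ j, ZMod (m j)) => z.2 j) ⁻¹' {0})
      ∩ (⋂ r ∈ Set.Iio N, ⋂ (_ : k < r), (fun z : (∀ j, ZMod (m j)) × (∀ j, ZMod (m j)) => z.1 r + z.2 r) ⁻¹' {0})) := by
    ext z
    simp only [Eset, Set.mem_setOf_eq, Set.mem_inter_iff, Set.mem_iInter, Set.mem_preimage,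
      Set.mem_singleton_iff, Set.mem_Iio]
    constructor
    · rintro ⟨h1, h2, h3⟩
      exact ⟨fun j hj hjq => h1 j hj hjq, fun j hj => h2 j hj, fun r hr hkr => h3 r hkr hr⟩
    · rintro ⟨h1, h2, h3⟩
      exact ⟨fun j hj hjq => h1 j hj hjq, fun j hj => h2 j hj, fun r hkr hr => h3 r hr hkr⟩
  rw [this]
  have m1 : ∀ j : ℕ, Measurable (fun z : (∀ j, ZMod (m j)) × (∀ j, ZMod (m j)) => z.1 j) :=
    fun j => (measurable_pi_apply j).comp measurable_fst
  have m2 : ∀ j : ℕ, Measurable (fun z : (∀ j, ZMod (m j)) × (∀ j, ZMod (m j)) => z.2 j) :=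
    fun j => (measurable_pi_apply j).comp measurable_snd
  refine MeasurableSet.inter ?_ (MeasurableSet.inter ?_ ?_)
  · exact MeasurableSet.biInter (Set.to_countable _) fun j _ =>
      MeasurableSet.iInter fun _ => (m1 j) (MeasurableSet.singleton 0)
  · exact MeasurableSet.biInter (Set.to_countable _) fun j _ => (m2 j) (MeasurableSet.singleton 0)
  · exact MeasurableSet.biInter (Set.to_countable _) fun r _ =>
      MeasurableSet.iInter fun _ => ((m1 r).add (m2 r)) (MeasurableSet.singleton 0)

lemma aux_sum_reindex {f : ℕ → ℕ → ℝ} {n N : ℕ}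
    (h0 : ∀ q k, 0 ≤ f q k) (hN : ∀ q k, N ≤ k → f q k = 0) :
    ∑ q ∈ Finset.range n, ∑ k ∈ Finset.Icc q (n-1), f q k
      ≤ ∑ k ∈ Finset.range N, ∑ q ∈ Finset.range (k+1), f q k := by
  have step1 : ∀ q, ∑ k ∈ Finset.Icc q (n-1), f q k
      ≤ ∑ k ∈ Finset.range N, (if q ≤ k then f q k else 0) := by
    intro q
    have e1 : ∑ k ∈ Finset.Icc q (n-1), f q k
        = ∑ k ∈ (Finset.Icc q (n-1)).filter (· < N), f q k := by
      symm
      apply Finset.sum_subset (Finset.filter_subset _ _)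
      intro k hk hk'
      rw [Finset.mem_filter] at hk'
      apply hN
      by_contra h
      exact hk' ⟨hk, by omega⟩
    rw [e1]
    have e2 : ∀ k ∈ (Finset.Icc q (n-1)).filter (· < N), f q k = (if q ≤ k then f q k else 0) := by
      intro k hk
      rw [Finset.mem_filter, Finset.mem_Icc] at hk
      rw [if_pos hk.1.1]
    rw [Finset.sum_congr rfl e2]
    apply Finset.sum_le_sum_of_subset_of_nonneg
    · intro k hk
      rw [Finset.mem_filter] at hk
      rw [Finset.mem_range]
      exact hk.2
    · intro k _ _
      split <;> simp [h0]
  calc ∑ q ∈ Finset.range n, ∑ k ∈ Finset.Icc q (n-1), f q k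
      ≤ ∑ q ∈ Finset.range n, ∑ k ∈ Finset.range N, (if q ≤ k then f q k else 0) :=
        Finset.sum_le_sum fun q _ => step1 q
  _ = ∑ k ∈ Finset.range N, ∑ q ∈ Finset.range n, (if q ≤ k then f q k else 0) :=
        Finset.sum_comm
  _ ≤ ∑ k ∈ Finset.range N, ∑ q ∈ Finset.range (k+1), f q k := by
      apply Finset.sum_le_sum
      intro k _
      have e1 : ∑ q ∈ Finset.range n, (if q ≤ k then f q k else 0)
          = ∑ q ∈ (Finset.range n).filter (· ≤ k), f q k := by
        rw [Finset.sum_filter]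
      rw [e1]
      apply Finset.sum_le_sum_of_subset_of_nonneg
      · intro q hq
        rw [Finset.mem_filter] at hq
        rw [Finset.mem_range]
        omega
      · intro q _ _
        exact h0 q k

lemma aux_rpow_sum {ι : Type*} (s : Finset ι) (g : ι → ℝ≥0∞) {p : ℝ}
    (hp0 : 0 < p) (hp1 : p ≤ 1) :
    (∑ i ∈ s, g i) ^ p ≤ ∑ i ∈ s, (g i) ^ p := by
  induction s using Finset.cons_induction with
  | empty => simp [ENNReal.zero_rpow_of_pos hp0]
  | cons a t hat ih =>
    rw [Finset.sum_cons, Finset.sum_cons]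
    calc (g a + ∑ i ∈ t, g i) ^ p ≤ (g a) ^ p + (∑ i ∈ t, g i) ^ p :=
        ENNReal.rpow_add_le_add_rpow _ _ hp0.le hp1
    _ ≤ (g a) ^ p + ∑ i ∈ t, (g i) ^ p := by gcongr

lemma aux_geo (hm : ∀ k, 2 ≤ m k) {s : ℝ} (hs : 0 < s) (N : ℕ) :
    ∑ k ∈ Finset.range N, ((Mf m k : ℝ≥0∞)) ^ s
      ≤ ((Mf m N : ℝ≥0∞)) ^ s * (1 - (2:ℝ≥0∞) ^ (-s))⁻¹ := by
  set r : ℝ≥0∞ := (2:ℝ≥0∞) ^ (-s) with hr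
  have hterm : ∀ k < N, ((Mf m k : ℝ≥0∞)) ^ s ≤ ((Mf m N : ℝ≥0∞)) ^ s * r ^ (N - k) := by
    intro k hk
    have h1 : (Mf m k : ℝ≥0∞) * (2:ℝ≥0∞) ^ (N - k : ℕ) ≤ (Mf m N : ℝ≥0∞) := by
      have := aux_Mf_le m hm (le_of_lt hk)
      calc (Mf m k : ℝ≥0∞) * (2:ℝ≥0∞) ^ (N - k : ℕ)
          = ((Mf m k * 2 ^ (N - k) : ℕ) : ℝ≥0∞) := by push_cast; ring
      _ ≤ (Mf m N : ℝ≥0∞) := by exact_mod_cast this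
    have h2 : ((Mf m k : ℝ≥0∞) * (2:ℝ≥0∞) ^ (N - k : ℕ)) ^ s ≤ ((Mf m N : ℝ≥0∞)) ^ s :=
      ENNReal.rpow_le_rpow h1 hs.le
    rw [ENNReal.mul_rpow_of_nonneg _ _ hs.le] at h2
    have h3 : ((2:ℝ≥0∞) ^ (N - k : ℕ)) ^ s = ((2:ℝ≥0∞) ^ s) ^ (N - k : ℕ) := by
      rw [← ENNReal.rpow_natCast (2:ℝ≥0∞) (N - k), ← ENNReal.rpow_mul, mul_comm,
        ENNReal.rpow_mul, ENNReal.rpow_natCast]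
    have h2' : (Mf m k : ℝ≥0∞) ^ s * ((2:ℝ≥0∞) ^ s) ^ (N - k : ℕ) ≤ ((Mf m N : ℝ≥0∞)) ^ s := by
      rw [← h3]; exact h2
    have hrinv : r ^ (N - k) * ((2:ℝ≥0∞) ^ s) ^ (N - k : ℕ) = 1 := by
      rw [hr, ← mul_pow]
      have : (2:ℝ≥0∞) ^ (-s) * (2:ℝ≥0∞) ^ s = 1 := by
        rw [← ENNReal.rpow_add _ _ (by norm_num) (by norm_num)]
        simp
      rw [this, one_pow]
    calc (Mf m k : ℝ≥0∞) ^ s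
        = (Mf m k : ℝ≥0∞) ^ s * (r ^ (N - k) * ((2:ℝ≥0∞) ^ s) ^ (N - k : ℕ)) := by
          rw [hrinv, mul_one]
    _ = ((Mf m k : ℝ≥0∞) ^ s * ((2:ℝ≥0∞) ^ s) ^ (N - k : ℕ)) * r ^ (N - k) := by ring
    _ ≤ ((Mf m N : ℝ≥0∞)) ^ s * r ^ (N - k) := mul_le_mul_left h2' _
  calc ∑ k ∈ Finset.range N, ((Mf m k : ℝ≥0∞)) ^ s
      ≤ ∑ k ∈ Finset.range N, ((Mf m N : ℝ≥0∞)) ^ s * r ^ (N - k) := by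
        apply Finset.sum_le_sum
        intro k hk
        exact hterm k (Finset.mem_range.mp hk)
  _ = ((Mf m N : ℝ≥0∞)) ^ s * ∑ k ∈ Finset.range N, r ^ (N - k) := by
        rw [Finset.mul_sum]
  _ ≤ ((Mf m N : ℝ≥0∞)) ^ s * (1 - r)⁻¹ := by
        apply mul_le_mul_right
        have hrefl : ∑ k ∈ Finset.range N, r ^ (N - k) = ∑ k ∈ Finset.range N, r ^ (k + 1) := by
          have := Finset.sum_range_reflect (fun j => r ^ (j + 1)) N
          rw [← this]
          apply Finset.sum_congr rfl
          intro j hj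
          rw [Finset.mem_range] at hj
          congr 1
          omega
        rw [hrefl]
        calc ∑ k ∈ Finset.range N, r ^ (k + 1) ≤ ∑ k ∈ Finset.range N, r ^ k := by
              apply Finset.sum_le_sum
              intro k _
              apply pow_le_pow_right_of_le_one' _ (by omega)
              rw [hr]
              apply le_of_lt
              apply ENNReal.rpow_lt_one_of_one_lt_of_neg (by norm_num)
              linarith
        _ ≤ ∑' k, r ^ k := ENNReal.sum_le_tsum _
        _ = (1 - r)⁻¹ := ENNReal.tsum_geometric r

lemma aux_geo_fin {s : ℝ} (hs : 0 < s) : (1 - (2:ℝ≥0∞) ^ (-s))⁻¹ < ⊤ := by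
  rw [ENNReal.inv_lt_top, tsub_pos_iff_lt]
  apply ENNReal.rpow_lt_one_of_one_lt_of_neg (by norm_num)
  linarith

variable (μ : Measure ((∀ j, ZMod (m j)) × (∀ j, ZMod (m j)))) [IsProbabilityMeasure μ]
  (hinv : ∀ (z : (∀ j, ZMod (m j)) × (∀ j, ZMod (m j)))
      (s : Set ((∀ j, ZMod (m j)) × (∀ j, ZMod (m j)))), μ ((fun w => z + w) ⁻¹' s) = μ s)

include hinv in
omit [IsProbabilityMeasure μ] in
lemma aux_map_add (z : (∀ j, ZMod (m j)) × (∀ j, ZMod (m j))) :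
    μ.map (fun w => z + w) = μ := by
  apply Measure.ext
  intro s hs
  rw [Measure.map_apply (aux_meas_add_left m z) hs]
  exact hinv z s

include hinv in
lemma aux_map_neg : μ.map (fun w : (∀ j, ZMod (m j)) × (∀ j, ZMod (m j)) => -w) = μ := by
  apply Measure.ext
  intro A hA
  rw [Measure.map_apply (aux_meas_neg m) hA]
  have ind_eq : ∀ (f : ((∀ j, ZMod (m j)) × (∀ j, ZMod (m j))) →
      ((∀ j, ZMod (m j)) × (∀ j, ZMod (m j)))) (w' : _),
      A.indicator (fun _ => (1:ℝ≥0∞)) (f w') = (f ⁻¹' A).indicator (fun _ => (1:ℝ≥0∞)) w' := by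
    intro f w'
    by_cases h : f w' ∈ A <;> simp [Set.indicator_apply, h]
  have key : ∫⁻ w, ∫⁻ w', A.indicator (fun _ => (1:ℝ≥0∞)) (w - w') ∂μ ∂μ
      = ∫⁻ w', ∫⁻ w, A.indicator (fun _ => (1:ℝ≥0∞)) (w - w') ∂μ ∂μ := by
    apply lintegral_lintegral_swap
    exact ((measurable_const.indicator hA).comp (aux_meas_sub2 m)).aemeasurable
  have left : ∫⁻ w, ∫⁻ w', A.indicator (fun _ => (1:ℝ≥0∞)) (w - w') ∂μ ∂μ
      = μ ((fun w : (∀ j, ZMod (m j)) × (∀ j, ZMod (m j)) => -w) ⁻¹' A) := by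
    have e1 : ∀ w : (∀ j, ZMod (m j)) × (∀ j, ZMod (m j)),
        ∫⁻ w', A.indicator (fun _ => (1:ℝ≥0∞)) (w - w') ∂μ
          = μ ((fun w : (∀ j, ZMod (m j)) × (∀ j, ZMod (m j)) => -w) ⁻¹' A) := by
      intro w
      rw [lintegral_congr (ind_eq (fun w' => w - w'))]
      have hpre : (fun w' : (∀ j, ZMod (m j)) × (∀ j, ZMod (m j)) => w - w') ⁻¹' A
          = (fun w' => (-w) + w') ⁻¹' ((fun v : (∀ j, ZMod (m j)) × (∀ j, ZMod (m j)) => -v) ⁻¹' A) := by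
        ext w'
        simp only [Set.mem_preimage]
        have : -(-w + w') = w - w' := by abel
        rw [this]
      have hms : MeasurableSet ((fun w' : (∀ j, ZMod (m j)) × (∀ j, ZMod (m j)) => w - w') ⁻¹' A) :=
        (aux_meas_const_sub m w) hA
      rw [lintegral_indicator hms, setLIntegral_one, hpre, hinv (-w)]
    rw [lintegral_congr e1, lintegral_const, measure_univ, mul_one]
  have right : ∫⁻ w', ∫⁻ w, A.indicator (fun _ => (1:ℝ≥0∞)) (w - w') ∂μ ∂μ = μ A := by
    have e1 : ∀ w' : (∀ j, ZMod (m j)) × (∀ j, ZMod (m j)),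
        ∫⁻ w, A.indicator (fun _ => (1:ℝ≥0∞)) (w - w') ∂μ = μ A := by
      intro w'
      rw [lintegral_congr (ind_eq (fun w => w - w'))]
      have hpre : (fun w : (∀ j, ZMod (m j)) × (∀ j, ZMod (m j)) => w - w') ⁻¹' A
          = (fun w => (-w') + w) ⁻¹' A := by
        ext w
        simp only [Set.mem_preimage]
        have : -w' + w = w - w' := by abel
        rw [this]
      have hms : MeasurableSet ((fun w : (∀ j, ZMod (m j)) × (∀ j, ZMod (m j)) => w - w') ⁻¹' A) := by
        rw [hpre]; exact (aux_meas_add_left m (-w')) hA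
      rw [lintegral_indicator hms, setLIntegral_one, hpre, hinv (-w')]
    rw [lintegral_congr e1, lintegral_const, measure_univ, mul_one]
  rw [← left, key, right]

include hinv in
lemma aux_integral_shift (a : ((∀ j, ZMod (m j)) × (∀ j, ZMod (m j))) → ℂ)
    (ha : Measurable a) (z : (∀ j, ZMod (m j)) × (∀ j, ZMod (m j))) :
    ∫ w, a (z - w) ∂μ = ∫ w, a w ∂μ := by
  have e1 : (fun w => a (z - w)) = (fun w => (a ∘ (fun v : (∀ j, ZMod (m j)) × (∀ j, ZMod (m j)) => -v)) ((-z) + w)) := by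
    funext w
    simp only [Function.comp_apply]
    congr 1
    abel
  rw [e1]
  have h2 : ∫ w, (a ∘ (fun v : (∀ j, ZMod (m j)) × (∀ j, ZMod (m j)) => -v)) ((-z) + w) ∂μ
      = ∫ w, (a ∘ (fun v : (∀ j, ZMod (m j)) × (∀ j, ZMod (m j)) => -v)) w ∂μ := by
    conv_rhs => rw [← aux_map_add m μ hinv (-z)]
    rw [integral_map (aux_meas_add_left m (-z)).aemeasurable
      (by rw [aux_map_add m μ hinv (-z)]; exact (ha.comp (aux_meas_neg m)).aestronglyMeasurable)]
  rw [h2]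
  conv_rhs => rw [← aux_map_neg m μ hinv]
  rw [integral_map (aux_meas_neg m).aemeasurable
    (by rw [aux_map_neg m μ hinv]; exact ha.aestronglyMeasurable)]
  rfl

lemma aux_Eset_measure (hm : ∀ k, 2 ≤ m k)
    (hcyl : ∀ (k : ℕ) (z w : ∀ j, ZMod (m j)),
      μ ((cyl m k z) ×ˢ (cyl m k w)) = ((Mf m k : ℝ≥0∞) * (Mf m k : ℝ≥0∞))⁻¹)
    {N q k : ℕ} (hq : q < N) (hk : k < N) :
    μ (Eset m N q k) ≤ (m q : ℝ≥0∞) * (m k : ℝ≥0∞) * (Mf m k : ℝ≥0∞)⁻¹ * (Mf m N : ℝ≥0∞)⁻¹ := by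
  haveI : ∀ j, NeZero (m j) := fun j => ⟨by have := hm j; omega⟩
  set D := ∀ j : Fin N, ZMod (m j) with hD
  classical
  set P : ℕ := ∏ j : Fin N, (if k ≤ (j : ℕ) then m j else 1) with hP
  set Ω : Finset (D × D) := Finset.univ.filter (fun de =>
    (∀ j : Fin N, (j:ℕ) < k → (j:ℕ) ≠ q → de.1 j = 0) ∧
    (∀ j : Fin N, (j:ℕ) < k → de.2 j = 0) ∧
    (∀ r : Fin N, k < (r:ℕ) → de.1 r + de.2 r = 0)) with hΩ
  have hcover : Eset m N q k ⊆ ⋃ de ∈ Ω,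
      (cyl m N (extD m N de.1)) ×ˢ (cyl m N (extD m N de.2)) := by
    intro z hz
    obtain ⟨h1, h2, h3⟩ := hz
    refine Set.mem_biUnion
      (show ((fun j : Fin N => z.1 j, fun j : Fin N => z.2 j) : D × D) ∈ Ω from ?_) ?_
    · rw [hΩ, Finset.mem_filter]
      exact ⟨Finset.mem_univ _,
        fun j hj hjq => h1 j hj hjq, fun j hj => h2 j hj, fun r hr => h3 r hr r.isLt⟩
    · constructor
      · intro j hj
        simp [extD, hj]
      · intro j hj
        simp [extD, hj]
  have hle1 : μ (Eset m N q k) ≤ (Ω.card : ℝ≥0∞) * ((Mf m N : ℝ≥0∞) * (Mf m N : ℝ≥0∞))⁻¹ := by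
    calc μ (Eset m N q k) ≤ μ (⋃ de ∈ Ω, (cyl m N (extD m N de.1)) ×ˢ
        (cyl m N (extD m N de.2))) := measure_mono hcover
    _ ≤ ∑ de ∈ Ω, μ ((cyl m N (extD m N de.1)) ×ˢ
        (cyl m N (extD m N de.2))) := measure_biUnion_finset_le Ω _
    _ = ∑ _de ∈ Ω, ((Mf m N : ℝ≥0∞) * (Mf m N : ℝ≥0∞))⁻¹ := by
        refine Finset.sum_congr rfl fun de _ => hcyl N _ _
    _ = (Ω.card : ℝ≥0∞) * ((Mf m N : ℝ≥0∞) * (Mf m N : ℝ≥0∞))⁻¹ := by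
        rw [Finset.sum_const, nsmul_eq_mul]
  haveI : ∀ j : Fin N, NeZero (if k ≤ (j:ℕ) then m j else 1) := fun j =>
    ⟨by have := hm (j:ℕ); by_cases h : k ≤ (j:ℕ) <;> simp [h] <;> omega⟩
  have hcard : Ω.card ≤ m q * (m k * P) := by
    have hinj : Set.InjOn (fun de : D × D =>
        ((de.1 ⟨q, hq⟩ : ZMod (m q)), (de.2 ⟨k, hk⟩ : ZMod (m k)),
          (fun j : Fin N => if h : k ≤ (j:ℕ) then cast (by rw [if_pos h]) (de.1 j) else 0 :
            ∀ j : Fin N, ZMod (if k ≤ (j:ℕ) then m j else 1)))) Ω := by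
      rintro ⟨d, e⟩ hde ⟨d', e'⟩ hde' heq
      rw [hΩ, Finset.coe_filter] at hde hde'
      obtain ⟨-, hd1, hd2, hd3⟩ := hde
      obtain ⟨-, hd1', hd2', hd3'⟩ := hde'
      simp only [Prod.mk.injEq] at heq
      obtain ⟨e1, e2, e3⟩ := heq
      have hdeq : d = d' := by
        funext j
        rcases Nat.lt_or_ge (j:ℕ) k with hjk | hjk
        · by_cases hjq : (j:ℕ) = q
          · have : j = ⟨q, hq⟩ := Fin.ext hjq
            rw [this]; exact e1
          · exact (hd1 j hjk hjq).trans (hd1' j hjk hjq).symm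
        · have h5 := congrFun e3 j
          rw [dif_pos hjk, dif_pos hjk] at h5
          exact (cast_inj _).mp h5
      subst hdeq
      have : e = e' := by
        funext j
        rcases Nat.lt_trichotomy (j:ℕ) k with hjk | hjk | hjk
        · exact (hd2 j hjk).trans (hd2' j hjk).symm
        · have : j = ⟨k, hk⟩ := Fin.ext hjk
          rw [this]; exact e2
        · have a1 : d j + e j = 0 := hd3 j hjk
          have a2 : d j + e' j = 0 := hd3' j hjk
          have b1 : e j = - d j := by linear_combination a1
          have b2 : e' j = - d j := by linear_combination a2
          rw [b1, b2]
      rw [this]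
    have := Finset.card_le_card_of_injOn _ (fun de _ => Finset.mem_univ _) hinj
    calc Ω.card ≤ Finset.univ.card := this
    _ = Fintype.card (ZMod (m q) × ZMod (m k) × (∀ j : Fin N, ZMod (if k ≤ (j:ℕ) then m j else 1))) :=
        rfl
    _ = m q * (m k * P) := by
        rw [Fintype.card_prod, Fintype.card_prod, Fintype.card_pi, ZMod.card, ZMod.card]
        congr 2
        rw [hP]
        refine Finset.prod_congr rfl fun j _ => ?_
        by_cases h : k ≤ (j:ℕ)
        · simp only [if_pos h]; exact ZMod.card _
        · simp only [if_neg h]; exact ZMod.card _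
  have hMk : (Mf m k : ℝ≥0∞) ≠ 0 := Nat.cast_ne_zero.mpr (aux_Mf_pos m hm k).ne'
  have hMkt : (Mf m k : ℝ≥0∞) ≠ ⊤ := natCast_ne_top _
  have hPe : (P : ℝ≥0∞) = (Mf m N : ℝ≥0∞) * (Mf m k : ℝ≥0∞)⁻¹ := by
    have h0 : Mf m k * P = Mf m N := by
      have hfin : ∏ j : Fin N, (if k ≤ (j:ℕ) then m j else 1)
          = ∏ j ∈ Finset.range N, (if k ≤ j then m j else 1) :=
        Fin.prod_univ_eq_prod_range (fun j => if k ≤ j then m j else 1) N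
      rw [hP, hfin]
      exact aux_Mf_prod_if m hm (le_of_lt hk)
    have h1 : (Mf m k : ℝ≥0∞) * (P : ℝ≥0∞) = (Mf m N : ℝ≥0∞) := by
      rw [← Nat.cast_mul, h0]
    calc (P : ℝ≥0∞) = ((Mf m k : ℝ≥0∞) * (P : ℝ≥0∞)) * (Mf m k : ℝ≥0∞)⁻¹ := by
          rw [mul_comm ((Mf m k : ℝ≥0∞)) (P : ℝ≥0∞), mul_assoc,
            ENNReal.mul_inv_cancel hMk hMkt, mul_one]
    _ = (Mf m N : ℝ≥0∞) * (Mf m k : ℝ≥0∞)⁻¹ := by rw [h1]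
  calc μ (Eset m N q k) ≤ (Ω.card : ℝ≥0∞) * ((Mf m N : ℝ≥0∞) * (Mf m N : ℝ≥0∞))⁻¹ := hle1
  _ ≤ ((m q * (m k * P) : ℕ) : ℝ≥0∞) * ((Mf m N : ℝ≥0∞) * (Mf m N : ℝ≥0∞))⁻¹ := by
      gcongr
  _ = (m q : ℝ≥0∞) * (m k : ℝ≥0∞) * (Mf m k : ℝ≥0∞)⁻¹ * (Mf m N : ℝ≥0∞)⁻¹ := by
      push_cast
      have hMN : (Mf m N : ℝ≥0∞) ≠ 0 := Nat.cast_ne_zero.mpr (aux_Mf_pos m hm N).ne'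
      have hMNt : (Mf m N : ℝ≥0∞) ≠ ⊤ := natCast_ne_top _
      rw [hPe, ENNReal.mul_inv (Or.inl hMN) (Or.inl hMNt)]
      calc (m q : ℝ≥0∞) * ((m k : ℝ≥0∞) * ((Mf m N : ℝ≥0∞) * (Mf m k : ℝ≥0∞)⁻¹)) *
            ((Mf m N : ℝ≥0∞)⁻¹ * (Mf m N : ℝ≥0∞)⁻¹)
          = (m q : ℝ≥0∞) * (m k : ℝ≥0∞) * (Mf m k : ℝ≥0∞)⁻¹ * (Mf m N : ℝ≥0∞)⁻¹ *
            ((Mf m N : ℝ≥0∞) * (Mf m N : ℝ≥0∞)⁻¹) := by ring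
      _ = (m q : ℝ≥0∞) * (m k : ℝ≥0∞) * (Mf m k : ℝ≥0∞)⁻¹ * (Mf m N : ℝ≥0∞)⁻¹ := by
          rw [ENNReal.mul_inv_cancel hMN hMNt, mul_one]

include hinv in
lemma aux_term_bound
    (hcyl : ∀ (k : ℕ) (z w : ∀ j, ZMod (m j)),
      μ ((cyl m k z) ×ˢ (cyl m k w)) = ((Mf m k : ℝ≥0∞) * (Mf m k : ℝ≥0∞))⁻¹)
    {N q k v n : ℕ} {C : ℝ}
    (a : ((∀ j, ZMod (m j)) × (∀ j, ZMod (m j))) → ℂ) (ha : Measurable a)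
    (hsupp : Function.support a ⊆ (cyl m N 0) ×ˢ (cyl m N 0))
    (hbd : ∀ z, ‖a z‖ ≤ C)
    (hzero : (∫ z, a z ∂μ) = 0)
    {x y : ∀ j, ZMod (m j)} (hx : x ∉ cyl m N 0) (hy : y ∉ cyl m N 0) :
    ‖∫ tu in (cyl m k (v • evec m q)) ×ˢ (cyl m k 0),
        a (x - tu.1, y - tu.2) *
          (if ∀ r ∈ Finset.Icc (k + 1) (n - 1), tu.1 r + tu.2 r = 0 then (1:ℂ) else 0) ∂μ‖
      ≤ if k < N ∧ (x, y) ∈ Eset m N q k then C * ((Mf m N : ℝ) * (Mf m N : ℝ))⁻¹ else 0 := by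
  have hC : 0 ≤ C := le_trans (norm_nonneg _) (hbd 0)
  set D := (cyl m k (v • evec m q)) ×ˢ (cyl m k 0) with hDdef
  have hD : MeasurableSet D := (aux_cyl_meas m k _).prod (aux_cyl_meas m k _)
  set F : ((∀ j, ZMod (m j)) × (∀ j, ZMod (m j))) → ℂ := fun tu =>
    a (x - tu.1, y - tu.2) *
      (if ∀ r ∈ Finset.Icc (k + 1) (n - 1), tu.1 r + tu.2 r = 0 then (1:ℂ) else 0) with hFdef
  have supp1 : ∀ w : (∀ j, ZMod (m j)) × (∀ j, ZMod (m j)), a (x - w.1, y - w.2) ≠ 0 →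
      (∀ j < N, w.1 j = x j) ∧ (∀ j < N, w.2 j = y j) := by
    intro w hw
    have := hsupp (Function.mem_support.mpr hw)
    obtain ⟨h1, h2⟩ := this
    constructor
    · intro j hj
      have := h1 j hj
      simp only [Pi.zero_apply] at this
      have : x j - w.1 j = 0 := this
      linear_combination -this
    · intro j hj
      have := h2 j hj
      simp only [Pi.zero_apply] at this
      have : y j - w.2 j = 0 := this
      linear_combination -this
  have hmeasF : Measurable F := by
    apply Measurable.mul
    · exact ha.comp ((measurable_const.sub measurable_fst).prodMk
        (measurable_const.sub measurable_snd))
    · apply Measurable.ite _ measurable_const measurable_const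
      have : {tu : (∀ j, ZMod (m j)) × (∀ j, ZMod (m j)) |
          ∀ r ∈ Finset.Icc (k + 1) (n - 1), tu.1 r + tu.2 r = 0}
          = ⋂ r ∈ Finset.Icc (k + 1) (n - 1),
            (fun tu : (∀ j, ZMod (m j)) × (∀ j, ZMod (m j)) => tu.1 r + tu.2 r) ⁻¹' {0} := by
        ext tu; simp
      rw [this]
      exact MeasurableSet.biInter (Set.to_countable _) fun r _ =>
        (((measurable_pi_apply r).comp measurable_fst).add
          ((measurable_pi_apply r).comp measurable_snd)) (MeasurableSet.singleton 0)
  have int_zero_of_D : (∀ w ∈ D, F w = 0) → ∫ tu in D, F tu ∂μ = 0 := by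
    intro h
    rw [setIntegral_congr_fun hD h]
    exact integral_zero _ _
  by_cases hkN : k < N
  · by_cases hsm : n - 1 < N
    · have hT : ∫ tu in D, F tu ∂μ = 0 := by
        by_cases hcompat : (∀ j, j < k → j ≠ q → x j = 0) ∧
            (q < k → x q = (v : ZMod (m q))) ∧ (∀ j, j < k → y j = 0)
        · obtain ⟨hc1, hc2, hc3⟩ := hcompat
          set ε : ℂ := if ∀ r ∈ Finset.Icc (k + 1) (n - 1), x r + y r = 0 then 1 else 0 with hε
          have hind : Set.indicator D F = fun w => ε * a (x - w.1, y - w.2) := by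
            funext w
            by_cases ha0 : a (x - w.1, y - w.2) = 0
            · by_cases hwD : w ∈ D <;> simp [Set.indicator_apply, hwD, ha0, hFdef]
            · obtain ⟨hs1, hs2⟩ := supp1 w ha0
              have hwD : w ∈ D := by
                constructor
                · intro j hj
                  by_cases hjq : j = q
                  · subst hjq
                    rw [hs1 j (lt_trans hj hkN), hc2 hj]
                    simp [evec]
                  · rw [hs1 j (lt_trans hj hkN), hc1 j hj hjq]
                    simp [evec, hjq]
                · intro j hj
                  rw [hs2 j (lt_trans hj hkN), hc3 j hj]
                  rfl
              rw [Set.indicator_of_mem hwD]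
              have hiff : (∀ r ∈ Finset.Icc (k + 1) (n - 1), w.1 r + w.2 r = 0)
                  ↔ (∀ r ∈ Finset.Icc (k + 1) (n - 1), x r + y r = 0) := by
                apply forall₂_congr
                intro r hr
                rw [Finset.mem_Icc] at hr
                have hrN : r < N := lt_of_le_of_lt hr.2 hsm
                rw [hs1 r hrN, hs2 r hrN]
              rw [hFdef]
              simp only [hε]
              have hite : (if ∀ r ∈ Finset.Icc (k + 1) (n - 1), w.1 r + w.2 r = 0 then (1:ℂ) else 0)
                  = (if ∀ r ∈ Finset.Icc (k + 1) (n - 1), x r + y r = 0 then (1:ℂ) else 0) := by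
                by_cases h : ∀ r ∈ Finset.Icc (k + 1) (n - 1), x r + y r = 0
                · rw [if_pos h, if_pos (hiff.mpr h)]
                · rw [if_neg h, if_neg (fun hh => h (hiff.mp hh))]
              rw [hite, mul_comm]
          have : ∫ tu in D, F tu ∂μ = ∫ w, Set.indicator D F w ∂μ :=
            (integral_indicator hD).symm
          rw [this, hind]
          rw [integral_const_mul]
          have : ∫ w, a (x - w.1, y - w.2) ∂μ = ∫ w, a ((x, y) - w) ∂μ := rfl
          rw [this, aux_integral_shift m μ hinv a ha (x, y), hzero, mul_zero]
        · apply int_zero_of_D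
          intro w hwD
          rw [hFdef]
          simp only []
          rcases not_and_or.mp hcompat with hc | hc
          · push_neg at hc
            obtain ⟨j, hj, hjq, hxj⟩ := hc
            have : a (x - w.1, y - w.2) = 0 := by
              by_contra ha0
              obtain ⟨hs1, -⟩ := supp1 w ha0
              have e1 : w.1 j = x j := hs1 j (lt_trans hj hkN)
              have e2 : w.1 j = (v • evec m q) j := hwD.1 j hj
              rw [e1] at e2
              apply hxj
              rw [e2]
              simp [evec, hjq]
            rw [this, zero_mul]
          rcases not_and_or.mp hc with hc' | hc'
          · push_neg at hc'
            obtain ⟨hqk', hxq⟩ := hc'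
            have : a (x - w.1, y - w.2) = 0 := by
              by_contra ha0
              obtain ⟨hs1, -⟩ := supp1 w ha0
              have e1 : w.1 q = x q := hs1 q (lt_trans hqk' hkN)
              have e2 : w.1 q = (v • evec m q) q := hwD.1 q hqk'
              rw [e1] at e2
              apply hxq
              rw [e2]
              simp [evec]
            rw [this, zero_mul]
          · push_neg at hc'
            obtain ⟨j, hj, hyj⟩ := hc'
            have : a (x - w.1, y - w.2) = 0 := by
              by_contra ha0
              obtain ⟨-, hs2⟩ := supp1 w ha0
              have e1 : w.2 j = y j := hs2 j (lt_trans hj hkN)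
              have e2 : w.2 j = (0 : ∀ j, ZMod (m j)) j := hwD.2 j hj
              rw [e1] at e2
              exact hyj (by rw [e2]; rfl)
            rw [this, zero_mul]
      rw [hT, norm_zero]
      by_cases hz : (x, y) ∈ Eset m N q k
      · rw [if_pos ⟨hkN, hz⟩]; positivity
      · rw [if_neg (by tauto)]
    · push_neg at hsm
      by_cases hz : (x, y) ∈ Eset m N q k
      · rw [if_pos ⟨hkN, hz⟩]
        set g : ((∀ j, ZMod (m j)) × (∀ j, ZMod (m j))) → ℝ :=
          Set.indicator ((cyl m N x) ×ˢ (cyl m N y)) (fun _ => C) with hgdef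
        have hmeasP : MeasurableSet ((cyl m N x) ×ˢ (cyl m N y)) :=
          (aux_cyl_meas m N x).prod (aux_cyl_meas m N y)
        have hFg : ∀ w, ‖F w‖ ≤ g w := by
          intro w
          by_cases ha0 : a (x - w.1, y - w.2) = 0
          · rw [hFdef]
            simp only [ha0, zero_mul, norm_zero, hgdef]
            exact Set.indicator_nonneg (fun _ _ => hC) w
          · obtain ⟨hs1, hs2⟩ := supp1 w ha0
            have hwP : w ∈ (cyl m N x) ×ˢ (cyl m N y) := ⟨hs1, hs2⟩
            rw [hgdef]
            simp only [Set.indicator_of_mem hwP]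
            rw [hFdef]
            simp only [norm_mul]
            calc ‖a (x - w.1, y - w.2)‖ * ‖(if ∀ r ∈ Finset.Icc (k + 1) (n - 1),
                w.1 r + w.2 r = 0 then (1:ℂ) else 0)‖
                ≤ C * 1 := by
                  apply mul_le_mul (hbd _) _ (norm_nonneg _) hC
                  split <;> simp
            _ = C := mul_one C
        have hintg : Integrable g μ := (integrable_const C).indicator hmeasP
        have hintF : Integrable F (μ.restrict D) := by
          apply Integrable.mono' (integrable_const C) hmeasF.aestronglyMeasurable
          filter_upwards with w
          calc ‖F w‖ ≤ g w := hFg w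
          _ ≤ C := by
            by_cases hw : w ∈ (cyl m N x) ×ˢ (cyl m N y) <;>
              simp [hgdef, Set.indicator_apply, hw, hC]
        calc ‖∫ tu in D, F tu ∂μ‖ ≤ ∫ tu in D, ‖F tu‖ ∂μ := norm_integral_le_integral_norm _
        _ ≤ ∫ tu in D, g tu ∂μ := by
            apply integral_mono hintF.norm (hintg.restrict) hFg
        _ ≤ ∫ tu, g tu ∂μ := by
            apply setIntegral_le_integral hintg
            filter_upwards with w
            exact Set.indicator_nonneg (fun _ _ => hC) w
        _ = C * (μ ((cyl m N x) ×ˢ (cyl m N y))).toReal := by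
            rw [hgdef, integral_indicator hmeasP, setIntegral_const, smul_eq_mul, mul_comm]; rfl
        _ = C * ((Mf m N : ℝ) * (Mf m N : ℝ))⁻¹ := by
            rw [hcyl N x y]
            congr 1
            rw [ENNReal.toReal_inv]
            simp
      · rw [if_neg (by tauto)]
        have hz' := hz
        rw [Eset] at hz'
        simp only [Set.mem_setOf_eq] at hz'
        have hT : ∫ tu in D, F tu ∂μ = 0 := by
          rcases not_and_or.mp hz' with hc | hc
          · push_neg at hc
            obtain ⟨j, hj, hjq, hxj⟩ := hc
            apply int_zero_of_D
            intro w hwD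
            have : a (x - w.1, y - w.2) = 0 := by
              by_contra ha0
              obtain ⟨hs1, -⟩ := supp1 w ha0
              have e1 : w.1 j = x j := hs1 j (lt_trans hj hkN)
              have e2 : w.1 j = (v • evec m q) j := hwD.1 j hj
              rw [e1] at e2
              apply hxj
              rw [e2]
              simp [evec, hjq]
            rw [hFdef]
            simp only [this, zero_mul]
          rcases not_and_or.mp hc with hc' | hc'
          · push_neg at hc'
            obtain ⟨j, hj, hyj⟩ := hc'
            apply int_zero_of_D
            intro w hwD
            have : a (x - w.1, y - w.2) = 0 := by
              by_contra ha0
              obtain ⟨-, hs2⟩ := supp1 w ha0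
              have e1 : w.2 j = y j := hs2 j (lt_trans hj hkN)
              have e2 : w.2 j = (0 : ∀ j, ZMod (m j)) j := hwD.2 j hj
              rw [e1] at e2
              exact hyj (by rw [e2]; rfl)
            rw [hFdef]
            simp only [this, zero_mul]
          · push_neg at hc'
            obtain ⟨r, hkr, hrN, hxy⟩ := hc'
            apply int_zero_of_D
            intro w _
            rw [hFdef]
            simp only []
            by_cases ha0 : a (x - w.1, y - w.2) = 0
            · rw [ha0, zero_mul]
            · obtain ⟨hs1, hs2⟩ := supp1 w ha0
              have hind0 : ¬ (∀ r' ∈ Finset.Icc (k + 1) (n - 1), w.1 r' + w.2 r' = 0) := by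
                intro hall
                apply hxy
                have hrmem : r ∈ Finset.Icc (k + 1) (n - 1) := by
                  rw [Finset.mem_Icc]
                  omega
                have := hall r hrmem
                rw [hs1 r hrN, hs2 r hrN] at this
                exact this
              rw [if_neg hind0, mul_zero]
        rw [hT, norm_zero]
  · have hT : ∫ tu in D, F tu ∂μ = 0 := by
      apply int_zero_of_D
      intro w hwD
      have : a (x - w.1, y - w.2) = 0 := by
        by_contra ha0
        obtain ⟨-, hs2⟩ := supp1 w ha0
        apply hy
        intro j hj
        have e1 : w.2 j = y j := hs2 j hj
        have e2 : w.2 j = (0 : ∀ j, ZMod (m j)) j := hwD.2 j (lt_of_lt_of_le hj (not_lt.mp hkN))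
        rw [e1] at e2
        rw [e2]
      rw [hFdef]
      simp only [this, zero_mul]
    rw [hT, norm_zero, if_neg (by tauto)]

end Aux


variable (m : ℕ → ℕ)

/-- First term of `V_n`. -/
def V1 (μ : Measure ((∀ j, ZMod (m j)) × (∀ j, ZMod (m j))))
    (n : ℕ) (f : (∀ j, ZMod (m j)) × (∀ j, ZMod (m j)) → ℂ) (x y : ∀ j, ZMod (m j)) : ℂ :=
  ∑ q ∈ Finset.range n, ∑ k ∈ Finset.Icc q (n - 1), ∑ v ∈ Finset.Icc 1 (m q - 1),
    ((Mf m q : ℂ) * (Mf m k : ℂ) / (m k : ℂ)) *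
      ∫ tu in (cyl m k (v • evec m q)) ×ˢ (cyl m k 0),
        f (x - tu.1, y - tu.2) *
          (if ∀ r ∈ Finset.Icc (k + 1) (n - 1), tu.1 r + tu.2 r = 0 then 1 else 0) ∂μ

/-- The maximal operator `V^{(1)}` is p-quasi-local for `1/2 < p ≤ 1`:
for every p-atom `a` supported on `I_N × I_N`, the p-th power of its maximal
function integrated outside `I_N × I_N` is bounded by a constant independent of
the atom and of `N`. -/
theorem stmt12 (hm : ∀ k, 2 ≤ m k) (B : ℕ) (hB : ∀ k, m k ≤ B)
    (μ : Measure ((∀ j, ZMod (m j)) × (∀ j, ZMod (m j)))) [IsProbabilityMeasure μ]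
    (hinv : ∀ (z : (∀ j, ZMod (m j)) × (∀ j, ZMod (m j)))
      (s : Set ((∀ j, ZMod (m j)) × (∀ j, ZMod (m j)))), μ ((fun w => z + w) ⁻¹' s) = μ s)
    (hcyl : ∀ (k : ℕ) (z w : ∀ j, ZMod (m j)),
      μ ((cyl m k z) ×ˢ (cyl m k w)) = ((Mf m k : ℝ≥0∞) * (Mf m k : ℝ≥0∞))⁻¹)
    (p : ℝ) (hp1 : 1 / 2 < p) (hp2 : p ≤ 1) :
    ∃ c : ℝ≥0∞, c < ⊤ ∧ ∀ (N : ℕ) (a : (∀ j, ZMod (m j)) × (∀ j, ZMod (m j)) → ℂ),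
      Measurable a →
      Function.support a ⊆ (cyl m N 0) ×ˢ (cyl m N 0) →
      (∀ z, ‖a z‖ ≤ (Mf m N : ℝ) ^ (2 / p)) →
      (∫ z, a z ∂μ) = 0 →
      ∫⁻ z in ((cyl m N 0)ᶜ ×ˢ (cyl m N 0)ᶜ),
        (⨆ n, (‖V1 m μ n a z.1 z.2‖₊ : ℝ≥0∞)) ^ p ∂μ ≤ c := by
  classical
  have hp0 : (0:ℝ) < p := by linarith
  have hs2p : (0:ℝ) < 2*p - 1 := by linarith
  set KP : ℝ≥0∞ := (1 - (2:ℝ≥0∞) ^ (-p))⁻¹ with hKP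
  set KQ : ℝ≥0∞ := (1 - (2:ℝ≥0∞) ^ (-(2*p-1)))⁻¹ with hKQ
  set BB : ℝ≥0∞ := (B : ℝ≥0∞) with hBB
  set c : ℝ≥0∞ := BB ^ p * BB ^ p * BB * BB * KP * KQ with hc
  have hBne : BB ≠ ⊤ := natCast_ne_top _
  refine ⟨c, ?_, ?_⟩
  · rw [hc]
    have h1 : BB ^ p ≠ ⊤ := ENNReal.rpow_ne_top_of_nonneg hp0.le hBne
    have h2 : KP ≠ ⊤ := (aux_geo_fin hp0).ne
    have h3 : KQ ≠ ⊤ := (aux_geo_fin hs2p).ne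
    have : BB ^ p * BB ^ p * BB * BB * KP * KQ ≠ ⊤ :=
      ENNReal.mul_ne_top (ENNReal.mul_ne_top (ENNReal.mul_ne_top
        (ENNReal.mul_ne_top (ENNReal.mul_ne_top h1 h1) hBne) hBne) h2) h3
    exact this.lt_top
  intro N a ha hsupp hbd hzero
  haveI : ∀ j, NeZero (m j) := fun j => ⟨by have := hm j; omega⟩
  have hMpos : ∀ k, (0:ℝ) < (Mf m k : ℝ) := fun k => by exact_mod_cast aux_Mf_pos m hm k
  have hMne : ∀ k, (Mf m k : ℝ≥0∞) ≠ 0 := fun k => Nat.cast_ne_zero.mpr (aux_Mf_pos m hm k).ne'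
  have hMnet : ∀ k, (Mf m k : ℝ≥0∞) ≠ ⊤ := fun k => natCast_ne_top _
  set U : ℝ := (Mf m N : ℝ) ^ (2 / p) * ((Mf m N : ℝ) * (Mf m N : ℝ))⁻¹ with hU
  have hUpos : 0 ≤ U := by positivity
  set creal : ℕ → ℕ → ℝ := fun q k =>
    (m q : ℝ) * ((Mf m q : ℝ) * (Mf m k : ℝ) / (m k : ℝ) * U) with hcreal
  have hcrealpos : ∀ q k, 0 ≤ creal q k := by
    intro q k
    rw [hcreal]
    positivity
  set CE : ℕ → ℕ → ℝ≥0∞ := fun q k => ENNReal.ofReal (creal q k) with hCE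
  set SB : ((∀ j, ZMod (m j)) × (∀ j, ZMod (m j))) → ℝ≥0∞ := fun z =>
    ∑ k ∈ Finset.range N, ∑ q ∈ Finset.range (k+1),
      (Eset m N q k).indicator (fun _ => CE q k) z with hSB
  -- Step A : pointwise bound on the maximal function
  have stepA : ∀ z : ((∀ j, ZMod (m j)) × (∀ j, ZMod (m j))),
      z.1 ∉ cyl m N 0 → z.2 ∉ cyl m N 0 →
      (⨆ n, (‖V1 m μ n a z.1 z.2‖₊ : ℝ≥0∞)) ≤ SB z := by
    intro z hx hy
    apply iSup_le
    intro n
    set TB : ℕ → ℕ → ℝ := fun q k =>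
      if k < N ∧ (z.1, z.2) ∈ Eset m N q k then
        (Mf m N : ℝ) ^ (2 / p) * ((Mf m N : ℝ) * (Mf m N : ℝ))⁻¹ else 0 with hTBdef
    have hTBnonneg : ∀ q k, 0 ≤ TB q k := by
      intro q k
      simp only [hTBdef]
      split
      · positivity
      · exact le_refl 0
    have hreal : ‖V1 m μ n a z.1 z.2‖ ≤ ∑ k ∈ Finset.range N, ∑ q ∈ Finset.range (k+1),
        (m q : ℝ) * ((Mf m q : ℝ) * (Mf m k : ℝ) / (m k : ℝ) * TB q k) := by
      have step1 : ‖V1 m μ n a z.1 z.2‖ ≤ ∑ q ∈ Finset.range n, ∑ k ∈ Finset.Icc q (n-1),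
          (m q : ℝ) * ((Mf m q : ℝ) * (Mf m k : ℝ) / (m k : ℝ) * TB q k) := by
        rw [V1]
        calc ‖∑ q ∈ Finset.range n, ∑ k ∈ Finset.Icc q (n - 1), ∑ v ∈ Finset.Icc 1 (m q - 1),
            ((Mf m q : ℂ) * (Mf m k : ℂ) / (m k : ℂ)) *
              ∫ tu in (cyl m k (v • evec m q)) ×ˢ (cyl m k 0),
                a (z.1 - tu.1, z.2 - tu.2) *
                  (if ∀ r ∈ Finset.Icc (k + 1) (n - 1), tu.1 r + tu.2 r = 0 then 1 else 0) ∂μ‖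
            ≤ ∑ q ∈ Finset.range n, ‖∑ k ∈ Finset.Icc q (n - 1), ∑ v ∈ Finset.Icc 1 (m q - 1),
              ((Mf m q : ℂ) * (Mf m k : ℂ) / (m k : ℂ)) *
              ∫ tu in (cyl m k (v • evec m q)) ×ˢ (cyl m k 0),
                a (z.1 - tu.1, z.2 - tu.2) *
                  (if ∀ r ∈ Finset.Icc (k + 1) (n - 1), tu.1 r + tu.2 r = 0 then 1 else 0) ∂μ‖ :=
            norm_sum_le _ _
        _ ≤ ∑ q ∈ Finset.range n, ∑ k ∈ Finset.Icc q (n-1),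
            (m q : ℝ) * ((Mf m q : ℝ) * (Mf m k : ℝ) / (m k : ℝ) * TB q k) := by
          apply Finset.sum_le_sum
          intro q _
          calc ‖∑ k ∈ Finset.Icc q (n - 1), ∑ v ∈ Finset.Icc 1 (m q - 1),
              ((Mf m q : ℂ) * (Mf m k : ℂ) / (m k : ℂ)) *
              ∫ tu in (cyl m k (v • evec m q)) ×ˢ (cyl m k 0),
                a (z.1 - tu.1, z.2 - tu.2) *
                  (if ∀ r ∈ Finset.Icc (k + 1) (n - 1), tu.1 r + tu.2 r = 0 then 1 else 0) ∂μ‖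
              ≤ ∑ k ∈ Finset.Icc q (n - 1), ‖∑ v ∈ Finset.Icc 1 (m q - 1),
              ((Mf m q : ℂ) * (Mf m k : ℂ) / (m k : ℂ)) *
              ∫ tu in (cyl m k (v • evec m q)) ×ˢ (cyl m k 0),
                a (z.1 - tu.1, z.2 - tu.2) *
                  (if ∀ r ∈ Finset.Icc (k + 1) (n - 1), tu.1 r + tu.2 r = 0 then 1 else 0) ∂μ‖ :=
              norm_sum_le _ _
          _ ≤ ∑ k ∈ Finset.Icc q (n-1),
              (m q : ℝ) * ((Mf m q : ℝ) * (Mf m k : ℝ) / (m k : ℝ) * TB q k) := by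
            apply Finset.sum_le_sum
            intro k _
            calc ‖∑ v ∈ Finset.Icc 1 (m q - 1),
                ((Mf m q : ℂ) * (Mf m k : ℂ) / (m k : ℂ)) *
                ∫ tu in (cyl m k (v • evec m q)) ×ˢ (cyl m k 0),
                  a (z.1 - tu.1, z.2 - tu.2) *
                    (if ∀ r ∈ Finset.Icc (k + 1) (n - 1), tu.1 r + tu.2 r = 0 then 1 else 0) ∂μ‖
                ≤ ∑ v ∈ Finset.Icc 1 (m q - 1), ‖((Mf m q : ℂ) * (Mf m k : ℂ) / (m k : ℂ)) *
                ∫ tu in (cyl m k (v • evec m q)) ×ˢ (cyl m k 0),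
                  a (z.1 - tu.1, z.2 - tu.2) *
                    (if ∀ r ∈ Finset.Icc (k + 1) (n - 1), tu.1 r + tu.2 r = 0 then 1 else 0) ∂μ‖ :=
                norm_sum_le _ _
            _ ≤ ∑ _v ∈ Finset.Icc 1 (m q - 1),
                ((Mf m q : ℝ) * (Mf m k : ℝ) / (m k : ℝ) * TB q k) := by
              apply Finset.sum_le_sum
              intro v _
              rw [norm_mul]
              have hcoef : ‖((Mf m q : ℂ) * (Mf m k : ℂ) / (m k : ℂ))‖
                  = (Mf m q : ℝ) * (Mf m k : ℝ) / (m k : ℝ) := by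
                rw [norm_div, norm_mul]
                simp [Complex.norm_natCast]
              rw [hcoef]
              apply mul_le_mul_of_nonneg_left _ (by positivity)
              exact aux_term_bound m μ hinv hcyl a ha hsupp hbd hzero hx hy
            _ ≤ (m q : ℝ) * ((Mf m q : ℝ) * (Mf m k : ℝ) / (m k : ℝ) * TB q k) := by
              rw [Finset.sum_const, nsmul_eq_mul]
              apply mul_le_mul_of_nonneg_right _ (by
                have := hTBnonneg q k
                positivity)
              rw [Nat.card_Icc]
              have hnat : (m q - 1 + 1 - 1) ≤ m q := by omega
              exact_mod_cast hnat
      refine le_trans step1 ?_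
      apply aux_sum_reindex
      · intro q k
        have := hTBnonneg q k
        positivity
      · intro q k hk
        have : TB q k = 0 := by
          simp only [hTBdef]
          rw [if_neg]
          rintro ⟨h1, -⟩
          omega
        rw [this, mul_zero, mul_zero]
    rw [show (‖V1 m μ n a z.1 z.2‖₊ : ℝ≥0∞) = ENNReal.ofReal ‖V1 m μ n a z.1 z.2‖ from (ofReal_norm (V1 m μ n a z.1 z.2)).symm]
    calc ENNReal.ofReal ‖V1 m μ n a z.1 z.2‖
        ≤ ENNReal.ofReal (∑ k ∈ Finset.range N, ∑ q ∈ Finset.range (k+1),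
          (m q : ℝ) * ((Mf m q : ℝ) * (Mf m k : ℝ) / (m k : ℝ) * TB q k)) :=
        ENNReal.ofReal_le_ofReal hreal
    _ ≤ SB z := by
        rw [ENNReal.ofReal_sum_of_nonneg (fun k _ => by
          apply Finset.sum_nonneg
          intro q _
          have := hTBnonneg q k
          positivity)]
        rw [hSB]
        apply Finset.sum_le_sum
        intro k hk
        rw [ENNReal.ofReal_sum_of_nonneg (fun q _ => by
          have := hTBnonneg q k
          positivity)]
        apply Finset.sum_le_sum
        intro q _
        by_cases hmem : (z.1, z.2) ∈ Eset m N q k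
        · have hmem' : z ∈ Eset m N q k := by rwa [Prod.mk.eta] at hmem
          rw [Set.indicator_of_mem hmem']
          have hcond : k < N ∧ (z.1, z.2) ∈ Eset m N q k := ⟨Finset.mem_range.mp hk, hmem⟩
          simp only [hTBdef]
          rw [if_pos hcond]
        · have hmem' : z ∉ Eset m N q k := by rwa [Prod.mk.eta] at hmem
          rw [Set.indicator_of_notMem hmem']
          have hcond : ¬(k < N ∧ (z.1, z.2) ∈ Eset m N q k) := by tauto
          simp only [hTBdef]
          rw [if_neg hcond]
          simp
  -- Step B-E : integrate
  have hRmeas : MeasurableSet (((cyl m N 0)ᶜ ×ˢ (cyl m N 0)ᶜ) :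
      Set ((∀ j, ZMod (m j)) × (∀ j, ZMod (m j)))) :=
    ((aux_cyl_meas m N 0).compl).prod ((aux_cyl_meas m N 0).compl)
  have chain1 : ∫⁻ z in ((cyl m N 0)ᶜ ×ˢ (cyl m N 0)ᶜ),
      (⨆ n, (‖V1 m μ n a z.1 z.2‖₊ : ℝ≥0∞)) ^ p ∂μ
      ≤ ∫⁻ z in ((cyl m N 0)ᶜ ×ˢ (cyl m N 0)ᶜ), (SB z) ^ p ∂μ := by
    apply setLIntegral_mono' hRmeas
    intro z hz
    have hz' := Set.mem_prod.mp hz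
    exact ENNReal.rpow_le_rpow (stepA z hz'.1 hz'.2) hp0.le
  have chain2 : ∀ z, (SB z) ^ p ≤ ∑ k ∈ Finset.range N, ∑ q ∈ Finset.range (k+1),
      (Eset m N q k).indicator (fun _ => (CE q k) ^ p) z := by
    intro z
    rw [hSB]
    calc (∑ k ∈ Finset.range N, ∑ q ∈ Finset.range (k+1),
        (Eset m N q k).indicator (fun _ => CE q k) z) ^ p
        ≤ ∑ k ∈ Finset.range N, (∑ q ∈ Finset.range (k+1),
          (Eset m N q k).indicator (fun _ => CE q k) z) ^ p :=
        aux_rpow_sum _ _ hp0 hp2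
    _ ≤ ∑ k ∈ Finset.range N, ∑ q ∈ Finset.range (k+1),
        ((Eset m N q k).indicator (fun _ => CE q k) z) ^ p := by
        apply Finset.sum_le_sum
        intro k _
        exact aux_rpow_sum _ _ hp0 hp2
    _ = ∑ k ∈ Finset.range N, ∑ q ∈ Finset.range (k+1),
        (Eset m N q k).indicator (fun _ => (CE q k) ^ p) z := by
        apply Finset.sum_congr rfl
        intro k _
        apply Finset.sum_congr rfl
        intro q _
        by_cases hmem : z ∈ Eset m N q k
        · simp [Set.indicator_of_mem hmem]
        · simp [Set.indicator_of_notMem hmem, ENNReal.zero_rpow_of_pos hp0]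
  have chain3 : ∫⁻ z in ((cyl m N 0)ᶜ ×ˢ (cyl m N 0)ᶜ), (SB z) ^ p ∂μ
      ≤ ∑ k ∈ Finset.range N, ∑ q ∈ Finset.range (k+1), (CE q k) ^ p * μ (Eset m N q k) := by
    calc ∫⁻ z in ((cyl m N 0)ᶜ ×ˢ (cyl m N 0)ᶜ), (SB z) ^ p ∂μ
        ≤ ∫⁻ z in ((cyl m N 0)ᶜ ×ˢ (cyl m N 0)ᶜ), ∑ k ∈ Finset.range N,
          ∑ q ∈ Finset.range (k+1), (Eset m N q k).indicator (fun _ => (CE q k) ^ p) z ∂μ :=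
        lintegral_mono fun z => chain2 z
    _ ≤ ∫⁻ z, ∑ k ∈ Finset.range N,
          ∑ q ∈ Finset.range (k+1), (Eset m N q k).indicator (fun _ => (CE q k) ^ p) z ∂μ :=
        setLIntegral_le_lintegral _ _
    _ = ∑ k ∈ Finset.range N, ∫⁻ z, ∑ q ∈ Finset.range (k+1),
          (Eset m N q k).indicator (fun _ => (CE q k) ^ p) z ∂μ := by
        apply lintegral_finset_sum
        intro k _
        apply Finset.measurable_sum
        intro q _
        exact measurable_const.indicator (aux_Eset_meas m N q k)
    _ = ∑ k ∈ Finset.range N, ∑ q ∈ Finset.range (k+1), ∫⁻ z,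
          (Eset m N q k).indicator (fun _ => (CE q k) ^ p) z ∂μ := by
        apply Finset.sum_congr rfl
        intro k _
        apply lintegral_finset_sum
        intro q _
        exact measurable_const.indicator (aux_Eset_meas m N q k)
    _ = ∑ k ∈ Finset.range N, ∑ q ∈ Finset.range (k+1), (CE q k) ^ p * μ (Eset m N q k) := by
        apply Finset.sum_congr rfl
        intro k _
        apply Finset.sum_congr rfl
        intro q _
        rw [lintegral_indicator (aux_Eset_meas m N q k), setLIntegral_const]
  -- Step G : the numeric estimate
  have hCEbound : ∀ k q, k < N → (CE q k) ≤ BB * (Mf m q : ℝ≥0∞) * (Mf m k : ℝ≥0∞) *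
      (Mf m N : ℝ≥0∞) ^ (2/p - 2) := by
    intro k q hkN
    have hcr : creal q k ≤ (B : ℝ) * ((Mf m q : ℝ) * (Mf m k : ℝ)) *
        ((Mf m N : ℝ) ^ (2/p - 2)) := by
      rw [hcreal, hU]
      have h1 : (Mf m N : ℝ) ^ (2 / p) * ((Mf m N : ℝ) * (Mf m N : ℝ))⁻¹
          = (Mf m N : ℝ) ^ (2/p - 2) := by
        rw [Real.rpow_sub (hMpos N)]
        congr 1
        rw [show (2:ℝ) = ((2:ℕ):ℝ) by norm_num, Real.rpow_natCast]
        ring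
      rw [h1]
      have h2 : (Mf m q : ℝ) * (Mf m k : ℝ) / (m k : ℝ) ≤ (Mf m q : ℝ) * (Mf m k : ℝ) := by
        apply div_le_self (by positivity)
        have := hm k
        exact_mod_cast by omega
      have h3 : (m q : ℝ) ≤ (B : ℝ) := by exact_mod_cast hB q
      have hrp : (0:ℝ) ≤ (Mf m N : ℝ) ^ (2/p - 2) := by positivity
      calc (m q : ℝ) * ((Mf m q : ℝ) * (Mf m k : ℝ) / (m k : ℝ) * ((Mf m N : ℝ) ^ (2/p - 2)))
          ≤ (B : ℝ) * ((Mf m q : ℝ) * (Mf m k : ℝ) * ((Mf m N : ℝ) ^ (2/p - 2))) := by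
            apply mul_le_mul h3 _ (by positivity) (by positivity)
            exact mul_le_mul_of_nonneg_right h2 hrp
      _ = (B : ℝ) * ((Mf m q : ℝ) * (Mf m k : ℝ)) * ((Mf m N : ℝ) ^ (2/p - 2)) := by ring
    rw [hCE]
    calc ENNReal.ofReal (creal q k) ≤ ENNReal.ofReal ((B : ℝ) * ((Mf m q : ℝ) * (Mf m k : ℝ)) *
        ((Mf m N : ℝ) ^ (2/p - 2))) := ENNReal.ofReal_le_ofReal hcr
    _ = BB * (Mf m q : ℝ≥0∞) * (Mf m k : ℝ≥0∞) * (Mf m N : ℝ≥0∞) ^ (2/p - 2) := by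
        rw [ENNReal.ofReal_mul (by positivity), ENNReal.ofReal_mul (by positivity),
          ENNReal.ofReal_mul (by positivity)]
        rw [← ENNReal.ofReal_rpow_of_pos (hMpos N)]
        simp only [ENNReal.ofReal_natCast, hBB]
        ring
  have numer : ∑ k ∈ Finset.range N, ∑ q ∈ Finset.range (k+1),
      (CE q k) ^ p * μ (Eset m N q k) ≤ c := by
    have hterm : ∀ k ∈ Finset.range N, ∀ q ∈ Finset.range (k+1),
        (CE q k) ^ p * μ (Eset m N q k)
          ≤ (BB ^ p * BB * BB * (Mf m N : ℝ≥0∞) ^ (1 - 2*p)) *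
            ((Mf m q : ℝ≥0∞) ^ p * ((Mf m k : ℝ≥0∞) ^ p * (Mf m k : ℝ≥0∞)⁻¹)) := by
      intro k hk q hq
      rw [Finset.mem_range] at hk hq
      have hqN : q < N := by omega
      have h1 : (CE q k) ^ p ≤ (BB * (Mf m q : ℝ≥0∞) * (Mf m k : ℝ≥0∞) *
          (Mf m N : ℝ≥0∞) ^ (2/p - 2)) ^ p := ENNReal.rpow_le_rpow (hCEbound k q hk) hp0.le
      have h2 : (BB * (Mf m q : ℝ≥0∞) * (Mf m k : ℝ≥0∞) * (Mf m N : ℝ≥0∞) ^ (2/p - 2)) ^ p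
          = BB ^ p * (Mf m q : ℝ≥0∞) ^ p * (Mf m k : ℝ≥0∞) ^ p *
            (Mf m N : ℝ≥0∞) ^ (2 - 2*p) := by
        rw [ENNReal.mul_rpow_of_nonneg _ _ hp0.le, ENNReal.mul_rpow_of_nonneg _ _ hp0.le,
          ENNReal.mul_rpow_of_nonneg _ _ hp0.le]
        congr 1
        rw [← ENNReal.rpow_mul]
        congr 1
        field_simp
      have h3 := aux_Eset_measure m μ hm hcyl hqN hk
      calc (CE q k) ^ p * μ (Eset m N q k)
          ≤ (BB ^ p * (Mf m q : ℝ≥0∞) ^ p * (Mf m k : ℝ≥0∞) ^ p *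
            (Mf m N : ℝ≥0∞) ^ (2 - 2*p)) *
            ((m q : ℝ≥0∞) * (m k : ℝ≥0∞) * (Mf m k : ℝ≥0∞)⁻¹ * (Mf m N : ℝ≥0∞)⁻¹) := by
            apply mul_le_mul' _ h3
            rw [← h2]
            exact h1
      _ ≤ (BB ^ p * (Mf m q : ℝ≥0∞) ^ p * (Mf m k : ℝ≥0∞) ^ p *
            (Mf m N : ℝ≥0∞) ^ (2 - 2*p)) *
            (BB * BB * (Mf m k : ℝ≥0∞)⁻¹ * (Mf m N : ℝ≥0∞)⁻¹) := by
            gcongr <;> [exact_mod_cast Nat.cast_le.mpr (hB q); exact_mod_cast Nat.cast_le.mpr (hB k)]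
      _ = (BB ^ p * BB * BB * ((Mf m N : ℝ≥0∞) ^ (2 - 2*p) * (Mf m N : ℝ≥0∞)⁻¹)) *
            ((Mf m q : ℝ≥0∞) ^ p * ((Mf m k : ℝ≥0∞) ^ p * (Mf m k : ℝ≥0∞)⁻¹)) := by ring
      _ = (BB ^ p * BB * BB * (Mf m N : ℝ≥0∞) ^ (1 - 2*p)) *
            ((Mf m q : ℝ≥0∞) ^ p * ((Mf m k : ℝ≥0∞) ^ p * (Mf m k : ℝ≥0∞)⁻¹)) := by
            congr 2
            rw [← ENNReal.rpow_neg_one (Mf m N : ℝ≥0∞),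
              ← ENNReal.rpow_add _ _ (hMne N) (hMnet N)]
            congr 1
            ring
    set A : ℝ≥0∞ := BB ^ p * BB * BB * (Mf m N : ℝ≥0∞) ^ (1 - 2*p) with hA
    calc ∑ k ∈ Finset.range N, ∑ q ∈ Finset.range (k+1), (CE q k) ^ p * μ (Eset m N q k)
        ≤ ∑ k ∈ Finset.range N, ∑ q ∈ Finset.range (k+1),
          A * ((Mf m q : ℝ≥0∞) ^ p * ((Mf m k : ℝ≥0∞) ^ p * (Mf m k : ℝ≥0∞)⁻¹)) := by
          apply Finset.sum_le_sum
          intro k hk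
          apply Finset.sum_le_sum
          intro q hq
          exact hterm k hk q hq
    _ = ∑ k ∈ Finset.range N, A * ((Mf m k : ℝ≥0∞) ^ p * (Mf m k : ℝ≥0∞)⁻¹) *
          (∑ q ∈ Finset.range (k+1), (Mf m q : ℝ≥0∞) ^ p) := by
          apply Finset.sum_congr rfl
          intro k _
          rw [Finset.mul_sum]
          apply Finset.sum_congr rfl
          intro q _
          ring
    _ ≤ ∑ k ∈ Finset.range N, A * ((Mf m k : ℝ≥0∞) ^ p * (Mf m k : ℝ≥0∞)⁻¹) *
          ((Mf m (k+1) : ℝ≥0∞) ^ p * KP) := by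
          apply Finset.sum_le_sum
          intro k _
          apply mul_le_mul_right
          exact aux_geo m hm hp0 (k+1)
    _ ≤ ∑ k ∈ Finset.range N, A * BB ^ p * KP * (Mf m k : ℝ≥0∞) ^ (2*p - 1) := by
          apply Finset.sum_le_sum
          intro k _
          have hMsucc : (Mf m (k+1) : ℝ≥0∞) ≤ BB * (Mf m k : ℝ≥0∞) := by
            rw [show Mf m (k+1) = m k * Mf m k from rfl]
            push_cast
            exact mul_le_mul_left (by exact_mod_cast Nat.cast_le.mpr (hB k)) _
          have h4 : (Mf m (k+1) : ℝ≥0∞) ^ p ≤ BB ^ p * (Mf m k : ℝ≥0∞) ^ p := by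
            calc (Mf m (k+1) : ℝ≥0∞) ^ p ≤ (BB * (Mf m k : ℝ≥0∞)) ^ p :=
                ENNReal.rpow_le_rpow hMsucc hp0.le
            _ = BB ^ p * (Mf m k : ℝ≥0∞) ^ p := ENNReal.mul_rpow_of_nonneg _ _ hp0.le
          have h5 : (Mf m k : ℝ≥0∞) ^ p * (Mf m k : ℝ≥0∞)⁻¹ * (Mf m k : ℝ≥0∞) ^ p
              = (Mf m k : ℝ≥0∞) ^ (2*p - 1) := by
            rw [← ENNReal.rpow_neg_one (Mf m k : ℝ≥0∞),
              ← ENNReal.rpow_add _ _ (hMne k) (hMnet k),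
              ← ENNReal.rpow_add _ _ (hMne k) (hMnet k)]
            congr 1
            ring
          calc A * ((Mf m k : ℝ≥0∞) ^ p * (Mf m k : ℝ≥0∞)⁻¹) * ((Mf m (k+1) : ℝ≥0∞) ^ p * KP)
              ≤ A * ((Mf m k : ℝ≥0∞) ^ p * (Mf m k : ℝ≥0∞)⁻¹) *
                ((BB ^ p * (Mf m k : ℝ≥0∞) ^ p) * KP) := by gcongr
          _ = A * BB ^ p * KP * ((Mf m k : ℝ≥0∞) ^ p * (Mf m k : ℝ≥0∞)⁻¹ *
              (Mf m k : ℝ≥0∞) ^ p) := by ring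
          _ = A * BB ^ p * KP * (Mf m k : ℝ≥0∞) ^ (2*p - 1) := by rw [h5]
    _ = A * BB ^ p * KP * (∑ k ∈ Finset.range N, (Mf m k : ℝ≥0∞) ^ (2*p - 1)) := by
          rw [Finset.mul_sum]
    _ ≤ A * BB ^ p * KP * ((Mf m N : ℝ≥0∞) ^ (2*p - 1) * KQ) := by
          apply mul_le_mul_right
          exact aux_geo m hm hs2p N
    _ ≤ c := by
        rw [hA, hc]
        apply le_of_eq
        have h6 : (Mf m N : ℝ≥0∞) ^ (1 - 2*p) * (Mf m N : ℝ≥0∞) ^ (2*p - 1) = 1 := by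
          rw [← ENNReal.rpow_add _ _ (hMne N) (hMnet N)]
          norm_num
        calc BB ^ p * BB * BB * (Mf m N : ℝ≥0∞) ^ (1 - 2*p) * BB ^ p * KP *
            ((Mf m N : ℝ≥0∞) ^ (2*p - 1) * KQ)
            = BB ^ p * BB ^ p * BB * BB * KP * KQ *
              ((Mf m N : ℝ≥0∞) ^ (1 - 2*p) * (Mf m N : ℝ≥0∞) ^ (2*p - 1)) := by ring
        _ = BB ^ p * BB ^ p * BB * BB * KP * KQ := by rw [h6, mul_one]
  exact le_trans chain1 (le_trans chain3 numer)
end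
end

section
/- For a bounded Vilenkin sequence m and 1/2 < p ≤ 1, the double sum estimate (M_N / M_N^{2p}) ∑_{q=0}^{N-1} M_q^p ∑_{k=q}^{N-1} M_k^{p-1} ≤ c_p holds with a constant c_p depending only on p and the bound on m (not on N). -/
open Complex Finset

noncomputable section

lemma Mf_pos' (m : ℕ → ℕ) (hm : ∀ k, 2 ≤ m k) (k : ℕ) : 0 < Mf m k := by
  induction k with
  | zero => simp [Mf]
  | succ n ih => exact Nat.mul_pos (by have := hm n; omega) ih

lemma Mf_growth (m : ℕ → ℕ) (hm : ∀ k, 2 ≤ m k) {q N : ℕ} (h : q ≤ N) :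
    Mf m q * 2 ^ (N - q) ≤ Mf m N := by
  induction N, h using Nat.le_induction with
  | base => simp
  | succ n hn ih =>
    have h1 : n + 1 - q = (n - q) + 1 := by omega
    rw [h1, pow_succ, ← mul_assoc]
    calc Mf m q * 2 ^ (n - q) * 2 ≤ Mf m n * 2 := Nat.mul_le_mul_right 2 ih
      _ ≤ m n * Mf m n := by rw [mul_comm (m n)]; exact Nat.mul_le_mul_left _ (hm n)
      _ = Mf m (n + 1) := rfl

theorem stmt13 (B : ℕ) (p : ℝ) (hp1 : 1 / 2 < p) (hp2 : p ≤ 1) :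
    ∃ c : ℝ, 0 < c ∧ ∀ (m : ℕ → ℕ), (∀ k, 2 ≤ m k) → (∀ k, m k ≤ B) → ∀ N : ℕ,
      (Mf m N : ℝ) / (Mf m N : ℝ) ^ (2 * p) *
        ∑ q ∈ Finset.range N, (Mf m q : ℝ) ^ p *
          ∑ k ∈ Finset.Icc q (N - 1), (Mf m k : ℝ) ^ (p - 1) ≤ c := by
  set r : ℝ := (2 : ℝ) ^ (1 - 2 * p) with hr_def
  have hr0 : 0 < r := Real.rpow_pos_of_pos (by norm_num) _
  have hr1 : r < 1 := Real.rpow_lt_one_of_one_lt_of_neg (by norm_num) (by linarith)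
  set f : ℕ → ℝ := fun t => ((t : ℝ) + 1) * r ^ (t + 1) with hf_def
  have hf_nonneg : ∀ t, 0 ≤ f t := fun t => by positivity
  have hsum : Summable f := by
    have h1 : Summable (fun t : ℕ => (t : ℝ) ^ 1 * r ^ t) :=
      summable_pow_mul_geometric_of_norm_lt_one 1 (by rw [Real.norm_eq_abs, abs_of_pos hr0]; exact hr1)
    have h2 : Summable (fun t : ℕ => r ^ t) := summable_geometric_of_lt_one hr0.le hr1
    have h3 : Summable (fun t : ℕ => ((t : ℝ) + 1) * r ^ t) := by
      simpa [add_mul, pow_one] using h1.add h2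
    have := h3.mul_right r
    refine this.congr fun t => ?_
    simp [hf_def, pow_succ]; ring
  refine ⟨1 + ∑' t, f t, by have := tsum_nonneg (L := SummationFilter.unconditional ℕ) hf_nonneg; linarith, fun m hm hmB N => ?_⟩
  have hMpos : ∀ k, (0 : ℝ) < (Mf m k : ℝ) := fun k => by
    exact_mod_cast Mf_pos' m hm k
  set A : ℝ := (Mf m N : ℝ) with hA_def
  have hApos : 0 < A := hMpos N
  -- rewrite prefactor
  have hpre : A / A ^ (2 * p) = A ^ (1 - 2 * p) := by
    rw [Real.rpow_sub hApos, Real.rpow_one]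
  -- key geometric identity
  have hrpow : ∀ n : ℕ, r ^ n = (((2 : ℝ) ^ n) ^ (2 * p - 1))⁻¹ := by
    intro n
    rw [hr_def, ← Real.rpow_natCast ((2:ℝ) ^ (1 - 2*p)) n,
        ← Real.rpow_natCast (2:ℝ) n, ← Real.rpow_mul (by norm_num),
        ← Real.rpow_mul (by norm_num), ← Real.rpow_neg (by norm_num)]
    ring_nf
  -- bound each summand
  have hterm : ∀ q ∈ Finset.range N,
      (Mf m q : ℝ) ^ p * ∑ k ∈ Finset.Icc q (N - 1), (Mf m k : ℝ) ^ (p - 1) ≤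
        A ^ (2 * p - 1) * (((N - q : ℕ) : ℝ) * r ^ (N - q)) := by
    intro q hq
    rw [Finset.mem_range] at hq
    have hinner : ∑ k ∈ Finset.Icc q (N - 1), (Mf m k : ℝ) ^ (p - 1) ≤
        ((N - q : ℕ) : ℝ) * (Mf m q : ℝ) ^ (p - 1) := by
      have hcard : (Finset.Icc q (N - 1)).card = N - q := by
        rw [Nat.card_Icc]; omega
      calc ∑ k ∈ Finset.Icc q (N - 1), (Mf m k : ℝ) ^ (p - 1)
          ≤ ∑ _k ∈ Finset.Icc q (N - 1), (Mf m q : ℝ) ^ (p - 1) := by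
            refine Finset.sum_le_sum fun k hk => ?_
            rw [Finset.mem_Icc] at hk
            have hle : (Mf m q : ℝ) ≤ (Mf m k : ℝ) := by
              exact_mod_cast le_trans (Nat.le_mul_of_pos_right _ (Nat.pow_pos (by norm_num)))
                (Mf_growth m hm hk.1)
            exact Real.rpow_le_rpow_of_nonpos (hMpos q) hle (by linarith)
        _ = ((N - q : ℕ) : ℝ) * (Mf m q : ℝ) ^ (p - 1) := by
            rw [Finset.sum_const, hcard, nsmul_eq_mul]
    have hq1 : (Mf m q : ℝ) ^ p * (((N - q : ℕ) : ℝ) * (Mf m q : ℝ) ^ (p - 1)) =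
        ((N - q : ℕ) : ℝ) * (Mf m q : ℝ) ^ (2 * p - 1) := by
      rw [mul_comm ((Mf m q : ℝ) ^ p), mul_assoc, ← Real.rpow_add (hMpos q)]
      ring_nf
    have hkey : (Mf m q : ℝ) * (2 : ℝ) ^ (N - q) ≤ A := by
      rw [hA_def]
      exact_mod_cast Mf_growth m hm hq.le
    have hgrow : (Mf m q : ℝ) ^ (2 * p - 1) ≤ A ^ (2 * p - 1) * r ^ (N - q) := by
      have h1 : ((Mf m q : ℝ) * (2 : ℝ) ^ (N - q)) ^ (2 * p - 1) ≤ A ^ (2 * p - 1) :=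
        Real.rpow_le_rpow (by positivity) hkey (by linarith)
      rw [Real.mul_rpow (hMpos q).le (by positivity)] at h1
      rw [hrpow (N - q), ← div_eq_mul_inv, le_div_iff₀ (by positivity)]
      exact h1
    calc (Mf m q : ℝ) ^ p * ∑ k ∈ Finset.Icc q (N - 1), (Mf m k : ℝ) ^ (p - 1)
        ≤ (Mf m q : ℝ) ^ p * (((N - q : ℕ) : ℝ) * (Mf m q : ℝ) ^ (p - 1)) := by
          exact mul_le_mul_of_nonneg_left hinner (by positivity)
      _ = ((N - q : ℕ) : ℝ) * (Mf m q : ℝ) ^ (2 * p - 1) := hq1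
      _ ≤ ((N - q : ℕ) : ℝ) * (A ^ (2 * p - 1) * r ^ (N - q)) :=
          mul_le_mul_of_nonneg_left hgrow (by positivity)
      _ = A ^ (2 * p - 1) * (((N - q : ℕ) : ℝ) * r ^ (N - q)) := by ring
  have hS : ∑ q ∈ Finset.range N, (Mf m q : ℝ) ^ p *
        ∑ k ∈ Finset.Icc q (N - 1), (Mf m k : ℝ) ^ (p - 1) ≤
      A ^ (2 * p - 1) * ∑ q ∈ Finset.range N, ((N - q : ℕ) : ℝ) * r ^ (N - q) := by
    rw [Finset.mul_sum]
    exact Finset.sum_le_sum hterm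
  have hT : ∑ q ∈ Finset.range N, ((N - q : ℕ) : ℝ) * r ^ (N - q) ≤ ∑' t, f t := by
    have hrefl : ∑ q ∈ Finset.range N, ((N - q : ℕ) : ℝ) * r ^ (N - q) =
        ∑ j ∈ Finset.range N, f j := by
      rw [← Finset.sum_range_reflect (fun q => ((N - q : ℕ) : ℝ) * r ^ (N - q)) N]
      refine Finset.sum_congr rfl fun j hj => ?_
      rw [Finset.mem_range] at hj
      have : N - (N - 1 - j) = j + 1 := by omega
      rw [this, hf_def]
      push_cast
      ring
    rw [hrefl]
    exact Summable.sum_le_tsum _ (fun t _ => hf_nonneg t) hsum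
  have hcancel : A ^ (1 - 2 * p) * A ^ (2 * p - 1) = 1 := by
    rw [← Real.rpow_add hApos]
    norm_num
  calc A / A ^ (2 * p) * ∑ q ∈ Finset.range N, (Mf m q : ℝ) ^ p *
        ∑ k ∈ Finset.Icc q (N - 1), (Mf m k : ℝ) ^ (p - 1)
      ≤ A ^ (1 - 2 * p) * (A ^ (2 * p - 1) * ∑ q ∈ Finset.range N, ((N - q : ℕ) : ℝ) * r ^ (N - q)) := by
        rw [hpre]
        exact mul_le_mul_of_nonneg_left hS (by positivity)
    _ = ∑ q ∈ Finset.range N, ((N - q : ℕ) : ℝ) * r ^ (N - q) := by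
        rw [← mul_assoc, hcancel, one_mul]
    _ ≤ ∑' t, f t := hT
    _ ≤ 1 + ∑' t, f t := by linarith [tsum_nonneg (L := SummationFilter.unconditional ℕ) hf_nonneg]
end
end
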